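/- For fixed θ ∈ (0,1) and β > 1/3, the estimate |m̃(D)^{-1}(χ_ε(D) - I)(ζρ)|_{Y^{1+θ}} ≲ ε^{(1-θ)/2} |ζ|_{Y¹} |ρ|_{Y¹} holds for all ζ, ρ ∈ Y^{1+θ}, where m̃(k) = 1 + k₂²/k₁² + (1/2)(β-1/3)k₁². -/

import Mathlib

open MeasureTheory

/-- The anisotropic KP weight `(1 + k₁² + k₂²/k₁²)^r`. -/
noncomputable def wgt (r : ℝ) (k : ℝ × ℝ) : ℝ := (1 + k.1 ^ 2 + k.2 ^ 2 / k.1 ^ 2) ^ r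

/-- The squared `Y^r` norm, computed on the Fourier side. -/
noncomputable def YnormSq (r : ℝ) (g : ℝ × ℝ → ℂ) : ℝ := ∫ k : ℝ × ℝ, wgt r k * ‖g k‖ ^ 2

/-- The KP symbol `m̃(k) = 1 + k₂²/k₁² + ½(β - 1/3)k₁²`. -/
noncomputable def mKP (β : ℝ) (k : ℝ × ℝ) : ℝ :=
  1 + k.2 ^ 2 / k.1 ^ 2 + (1 / 2) * (β - 1 / 3) * k.1 ^ 2

/-- Characteristic function (as a complex scalar) of the cone `C_ε`. -/
noncomputable def chiC (ε δ : ℝ) (k : ℝ × ℝ) : ℂ :=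
  if |k.1| ≤ δ / ε ∧ |k.2 / k.1| ≤ δ / ε then 1 else 0

/-- Convolution on the Fourier side (corresponding to a product in physical space). -/
noncomputable def conv (f g : ℝ × ℝ → ℂ) : ℝ × ℝ → ℂ := fun k => ∫ j : ℝ × ℝ, f j * g (k - j)

open Real


noncomputable def Phi (a : ℝ) : ℝ := |a| / ((1 + a ^ 2) * Real.sqrt (1 + a ^ 2))

noncomputable def winv (j : ℝ × ℝ) : ℝ := (1 + j.1 ^ 2 + j.2 ^ 2 / j.1 ^ 2)⁻¹

lemma winv_nonneg (j : ℝ × ℝ) : 0 ≤ winv j := by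
  have : (0:ℝ) ≤ j.2 ^ 2 / j.1 ^ 2 := by positivity
  unfold winv; positivity

lemma Phi_nonneg (a : ℝ) : 0 ≤ Phi a := by unfold Phi; positivity

lemma measurable_winv : Measurable winv :=
  (((measurable_const.add ((measurable_fst.pow_const 2))).add
    ((measurable_snd.pow_const 2).div (measurable_fst.pow_const 2))).inv)

lemma continuous_Phi : Continuous Phi := by
  apply Continuous.div (continuous_abs)
  · exact (continuous_const.add (continuous_pow 2)).mul
      ((continuous_const.add (continuous_pow 2)).sqrt)
  · intro a
    have h1 : (0:ℝ) < 1 + a ^ 2 := by positivity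
    have := Real.sqrt_pos.2 h1
    positivity

lemma lintegral_sub_left (f : ℝ → ENNReal) (hf : Measurable f) (a : ℝ) :
    ∫⁻ x : ℝ, f (a - x) = ∫⁻ x : ℝ, f x := by
  have h1 : ∀ x : ℝ, a - x = -(x - a) := fun x => by ring
  simp_rw [h1]
  rw [lintegral_sub_right_eq_self (fun x => f (-x)) a]
  rw [← lintegral_map hf measurable_neg, Measure.map_neg_eq_self (volume : Measure ℝ)]

lemma ae_ne' (c : ℝ) : ∀ᵐ (a : ℝ), a ≠ c := by
  rw [ae_iff]
  have : {a : ℝ | ¬ a ≠ c} = {c} := by ext a; simp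
  rw [this]
  exact measure_singleton c

lemma sqrt_le_of_sq_le_mul {x y z : ENNReal} (h : x ^ 2 ≤ y * z) :
    x ≤ y ^ (1/2:ℝ) * z ^ (1/2:ℝ) := by
  have hx : x = (x ^ 2) ^ (1/2:ℝ) := by
    rw [← ENNReal.rpow_natCast x 2, ← ENNReal.rpow_mul]
    norm_num
  rw [hx, ← ENNReal.mul_rpow_of_nonneg y z (by norm_num)]
  exact ENNReal.rpow_le_rpow h (by norm_num)

lemma half_pow {y : ENNReal} : (y ^ (1/2:ℝ)) ^ 2 = y := by
  rw [← ENNReal.rpow_natCast (y ^ (1/2:ℝ)) 2, ← ENNReal.rpow_mul]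
  norm_num

lemma lintegral_CS {α : Type*} [MeasurableSpace α] (μ : Measure α) {f g : α → ENNReal}
    (hf : AEMeasurable f μ) (hg : AEMeasurable g μ) :
    (∫⁻ a, f a * g a ∂μ) ^ 2 ≤ (∫⁻ a, f a ^ 2 ∂μ) * (∫⁻ a, g a ^ 2 ∂μ) := by
  have h2 : (2:ℝ).HolderConjugate 2 := by constructor <;> norm_num
  have h := ENNReal.lintegral_mul_le_Lp_mul_Lq μ h2 hf hg
  simp only [Pi.mul_apply] at h
  have e : ∀ (F : α → ENNReal), (∫⁻ a, F a ^ (2:ℝ) ∂μ) = ∫⁻ a, F a ^ 2 ∂μ := fun F =>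
    lintegral_congr fun a => by rw [← ENNReal.rpow_natCast]; norm_num
  calc (∫⁻ a, f a * g a ∂μ) ^ 2
      ≤ ((∫⁻ a, f a ^ (2:ℝ) ∂μ) ^ (1/(2:ℝ)) * (∫⁻ a, g a ^ (2:ℝ) ∂μ) ^ (1/(2:ℝ))) ^ 2 :=
        pow_le_pow_left' h 2
    _ = (∫⁻ a, f a ^ 2 ∂μ) * (∫⁻ a, g a ^ 2 ∂μ) := by
        rw [mul_pow, ← ENNReal.rpow_natCast (_ ^ (1/(2:ℝ))) 2,
          ← ENNReal.rpow_natCast ((∫⁻ a, g a ^ (2:ℝ) ∂μ) ^ (1/(2:ℝ))) 2,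
          ← ENNReal.rpow_mul, ← ENNReal.rpow_mul, e f, e g]
        norm_num

lemma lorentz_eq (A : ℝ) (hA : 0 < A) : (fun x : ℝ => (A ^ 2 + x ^ 2)⁻¹)
    = fun x : ℝ => A⁻¹ ^ 2 * (1 + (x / A) ^ 2)⁻¹ := by
  funext x
  rw [← mul_inv_eq_iff_eq_mul₀ (by positivity), ← mul_inv]
  field_simp

lemma lorentz_integrable (A : ℝ) (hA : 0 < A) :
    Integrable fun x : ℝ => (A ^ 2 + x ^ 2)⁻¹ := by
  rw [lorentz_eq A hA]
  exact (integrable_inv_one_add_sq.comp_div hA.ne').const_mul _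

lemma lorentz_lintegral (A : ℝ) (hA : 0 < A) :
    ∫⁻ x : ℝ, ENNReal.ofReal ((A ^ 2 + x ^ 2)⁻¹) = ENNReal.ofReal (π / A) := by
  rw [← ofReal_integral_eq_lintegral_ofReal (lorentz_integrable A hA)
    (Filter.Eventually.of_forall fun x => by positivity)]
  congr 1
  rw [lorentz_eq A hA, integral_const_mul, MeasureTheory.Measure.integral_comp_div
    (fun y : ℝ => (1 + y ^ 2)⁻¹) A, integral_univ_inv_one_add_sq,
    abs_of_pos hA, smul_eq_mul]
  field_simp

lemma inner_sq (a : ℝ) (ha : a ≠ 0) :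
    ∫⁻ x : ℝ, ENNReal.ofReal ((1 + a ^ 2 + x ^ 2 / a ^ 2)⁻¹) ^ 2
      ≤ ENNReal.ofReal (π * Phi a) := by
  set A : ℝ := |a| * Real.sqrt (1 + a ^ 2) with hAdef
  have h1 : (0:ℝ) < 1 + a ^ 2 := by positivity
  have hA : 0 < A := mul_pos (abs_pos.2 ha) (Real.sqrt_pos.2 h1)
  have hA2 : A ^ 2 = a ^ 2 * (1 + a ^ 2) := by
    rw [hAdef, mul_pow, sq_abs, Real.sq_sqrt h1.le]
  have key : ∀ x : ℝ, (1 + a ^ 2 + x ^ 2 / a ^ 2)⁻¹ = a ^ 2 * (A ^ 2 + x ^ 2)⁻¹ := by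
    intro x
    rw [hA2, ← mul_inv_eq_iff_eq_mul₀ (by positivity), ← mul_inv]
    field_simp
  have ptwise : ∀ x : ℝ, ENNReal.ofReal ((1 + a ^ 2 + x ^ 2 / a ^ 2)⁻¹) ^ 2
      ≤ ENNReal.ofReal ((a ^ 2 * (a ^ 2 * A⁻¹ ^ 2)) * (A ^ 2 + x ^ 2)⁻¹) := by
    intro x
    rw [← ENNReal.ofReal_pow (by positivity), key x]
    apply ENNReal.ofReal_le_ofReal
    have h2 : (A ^ 2 + x ^ 2)⁻¹ ≤ A⁻¹ ^ 2 := by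
      rw [inv_pow, inv_le_inv₀ (by positivity) (by positivity)]
      nlinarith [sq_nonneg x]
    calc (a ^ 2 * (A ^ 2 + x ^ 2)⁻¹) ^ 2
        = a ^ 2 * ((A ^ 2 + x ^ 2)⁻¹ * ((A ^ 2 + x ^ 2)⁻¹ * a ^ 2)) := by ring
      _ ≤ a ^ 2 * ((A ^ 2 + x ^ 2)⁻¹ * (A⁻¹ ^ 2 * a ^ 2)) := by gcongr
      _ = a ^ 2 * (a ^ 2 * A⁻¹ ^ 2) * (A ^ 2 + x ^ 2)⁻¹ := by ring
  calc ∫⁻ x : ℝ, ENNReal.ofReal ((1 + a ^ 2 + x ^ 2 / a ^ 2)⁻¹) ^ 2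
      ≤ ∫⁻ x : ℝ, ENNReal.ofReal ((a ^ 2 * (a ^ 2 * A⁻¹ ^ 2)) * (A ^ 2 + x ^ 2)⁻¹) :=
        lintegral_mono ptwise
    _ = ENNReal.ofReal (a ^ 2 * (a ^ 2 * A⁻¹ ^ 2)) * ∫⁻ x : ℝ, ENNReal.ofReal ((A ^ 2 + x ^ 2)⁻¹) := by
        simp_rw [ENNReal.ofReal_mul (by positivity : (0:ℝ) ≤ a ^ 2 * (a ^ 2 * A⁻¹ ^ 2))]
        rw [lintegral_const_mul' _ _ ENNReal.ofReal_ne_top]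
    _ = ENNReal.ofReal (a ^ 2 * (a ^ 2 * A⁻¹ ^ 2)) * ENNReal.ofReal (π / A) := by
        rw [lorentz_lintegral A hA]
    _ = ENNReal.ofReal (π * Phi a) := by
        rw [← ENNReal.ofReal_mul (by positivity)]
        congr 1
        have hs : Real.sqrt (1 + a ^ 2) ≠ 0 := (Real.sqrt_pos.2 h1).ne'
        have hs2 : Real.sqrt (1 + a ^ 2) * Real.sqrt (1 + a ^ 2) = 1 + a ^ 2 :=
          Real.mul_self_sqrt h1.le
        unfold Phi
        have h5 : |a| * |a| = a ^ 2 := by rw [← sq_abs]; ring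
        rw [hAdef]
        field_simp
        rw [Real.sq_sqrt h1.le, ← abs_pow, abs_of_nonneg (by positivity : (0:ℝ) ≤ a ^ 4)]

lemma Phi_le (a : ℝ) : Phi a ≤ (1 + a ^ 2)⁻¹ := by
  have h1 : (0:ℝ) < 1 + a ^ 2 := by positivity
  have hs : 0 < Real.sqrt (1 + a ^ 2) := Real.sqrt_pos.2 h1
  have habs : |a| ≤ Real.sqrt (1 + a ^ 2) := by
    rw [← Real.sqrt_sq_eq_abs]
    exact Real.sqrt_le_sqrt (by nlinarith)
  unfold Phi
  rw [div_le_iff₀ (by positivity)]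
  calc |a| ≤ Real.sqrt (1 + a ^ 2) := habs
    _ = (1 + a ^ 2)⁻¹ * ((1 + a ^ 2) * Real.sqrt (1 + a ^ 2)) := by field_simp

lemma Phi_lintegral : ∫⁻ a : ℝ, ENNReal.ofReal (Phi a) ≤ ENNReal.ofReal π := by
  calc ∫⁻ a : ℝ, ENNReal.ofReal (Phi a)
      ≤ ∫⁻ a : ℝ, ENNReal.ofReal (((1:ℝ) ^ 2 + a ^ 2)⁻¹) := by
        apply lintegral_mono
        intro a
        apply ENNReal.ofReal_le_ofReal
        rw [one_pow]
        exact Phi_le a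
    _ = ENNReal.ofReal (π / 1) := lorentz_lintegral 1 one_pos
    _ = ENNReal.ofReal π := by norm_num

lemma Ibound (k : ℝ × ℝ) :
    ∫⁻ j : ℝ × ℝ, ENNReal.ofReal (winv j) * ENNReal.ofReal (winv (k - j))
      ≤ ENNReal.ofReal (π ^ 2) := by
  have hπ : (0:ℝ) ≤ π := Real.pi_nonneg
  have hmeas : Measurable fun j : ℝ × ℝ =>
      ENNReal.ofReal (winv j) * ENNReal.ofReal (winv (k - j)) := by
    exact (measurable_winv.ennreal_ofReal).mul
      ((measurable_winv.comp (measurable_const.sub measurable_id)).ennreal_ofReal)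
  have hPmeas : Measurable fun a : ℝ => (ENNReal.ofReal (π * Phi a)) ^ (1/2:ℝ) := by
    exact ((continuous_Phi.measurable.const_mul π).ennreal_ofReal).pow_const _
  -- inner bound
  have hinner : ∀ a : ℝ, a ≠ 0 → k.1 - a ≠ 0 →
      (∫⁻ x : ℝ, ENNReal.ofReal (winv (a, x)) * ENNReal.ofReal (winv (k.1 - a, k.2 - x)))
        ≤ (ENNReal.ofReal (π * Phi a)) ^ (1/2:ℝ)
          * (ENNReal.ofReal (π * Phi (k.1 - a))) ^ (1/2:ℝ) := by
    intro a ha hb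
    apply sqrt_le_of_sq_le_mul
    have h1 : AEMeasurable (fun x : ℝ => ENNReal.ofReal (winv (a, x))) volume :=
      ((measurable_winv.comp (measurable_const.prodMk measurable_id)).ennreal_ofReal).aemeasurable
    have h2 : AEMeasurable (fun x : ℝ => ENNReal.ofReal (winv (k.1 - a, k.2 - x))) volume := by
      exact ((measurable_winv.comp (measurable_const.prodMk
        (measurable_const.sub measurable_id))).ennreal_ofReal).aemeasurable
    refine le_trans (lintegral_CS volume h1 h2) ?_
    have e1 : (∫⁻ x : ℝ, ENNReal.ofReal (winv (a, x)) ^ 2) ≤ ENNReal.ofReal (π * Phi a) := by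
      simpa [winv] using inner_sq a ha
    have e2 : (∫⁻ x : ℝ, ENNReal.ofReal (winv (k.1 - a, k.2 - x)) ^ 2)
        ≤ ENNReal.ofReal (π * Phi (k.1 - a)) := by
      have := lintegral_sub_left (fun x => ENNReal.ofReal (winv (k.1 - a, x)) ^ 2)
        (((measurable_winv.comp (measurable_const.prodMk measurable_id)).ennreal_ofReal).pow_const 2) k.2
      rw [show (fun x : ℝ => ENNReal.ofReal (winv (k.1 - a, k.2 - x)) ^ 2)
          = fun x : ℝ => (fun y => ENNReal.ofReal (winv (k.1 - a, y)) ^ 2) (k.2 - x) from rfl, this]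
      simpa [winv] using inner_sq (k.1 - a) hb
    exact mul_le_mul' e1 e2
  -- iterate
  rw [Measure.volume_eq_prod, lintegral_prod _ hmeas.aemeasurable]
  have step : ∀ a : ℝ, a ≠ 0 → k.1 - a ≠ 0 →
      (∫⁻ x : ℝ, ENNReal.ofReal (winv (a, x)) * ENNReal.ofReal (winv (k - (a, x))))
        ≤ (ENNReal.ofReal (π * Phi a)) ^ (1/2:ℝ)
          * (ENNReal.ofReal (π * Phi (k.1 - a))) ^ (1/2:ℝ) := by
    intro a ha hb
    have : ∀ x : ℝ, k - (a, x) = (k.1 - a, k.2 - x) := fun x => rfl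
    simp_rw [this]
    exact hinner a ha hb
  calc (∫⁻ a : ℝ, ∫⁻ x : ℝ, ENNReal.ofReal (winv (a, x)) * ENNReal.ofReal (winv (k - (a, x))))
      ≤ ∫⁻ a : ℝ, (ENNReal.ofReal (π * Phi a)) ^ (1/2:ℝ)
          * (ENNReal.ofReal (π * Phi (k.1 - a))) ^ (1/2:ℝ) := by
        apply lintegral_mono_ae
        filter_upwards [ae_ne' (0:ℝ), ae_ne' k.1] with a ha hb
        exact step a ha (fun h => hb (by linarith [sub_eq_zero.1 h]))
    _ ≤ ENNReal.ofReal (π ^ 2) := by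
        have hP2 : (∫⁻ a : ℝ, ((ENNReal.ofReal (π * Phi a)) ^ (1/2:ℝ)) ^ 2)
            ≤ ENNReal.ofReal (π ^ 2) := by
          simp_rw [half_pow]
          calc (∫⁻ a : ℝ, ENNReal.ofReal (π * Phi a))
              = ENNReal.ofReal π * ∫⁻ a : ℝ, ENNReal.ofReal (Phi a) := by
                simp_rw [ENNReal.ofReal_mul hπ]
                rw [lintegral_const_mul' _ _ ENNReal.ofReal_ne_top]
            _ ≤ ENNReal.ofReal π * ENNReal.ofReal π := by
                gcongr
                exact Phi_lintegral
            _ = ENNReal.ofReal (π ^ 2) := by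
                rw [← ENNReal.ofReal_mul hπ]; congr 1; ring
        have hQ2 : (∫⁻ a : ℝ, ((ENNReal.ofReal (π * Phi (k.1 - a))) ^ (1/2:ℝ)) ^ 2)
            ≤ ENNReal.ofReal (π ^ 2) := by
          have := lintegral_sub_left
            (fun y => ((ENNReal.ofReal (π * Phi y)) ^ (1/2:ℝ)) ^ 2)
            (hPmeas.pow_const 2) k.1
          rw [show (fun a : ℝ => ((ENNReal.ofReal (π * Phi (k.1 - a))) ^ (1/2:ℝ)) ^ 2)
              = fun a : ℝ => (fun y => ((ENNReal.ofReal (π * Phi y)) ^ (1/2:ℝ)) ^ 2) (k.1 - a)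
              from rfl, this]
          exact hP2
        have hCS := lintegral_CS volume
          (f := fun a : ℝ => (ENNReal.ofReal (π * Phi a)) ^ (1/2:ℝ))
          (g := fun a : ℝ => (ENNReal.ofReal (π * Phi (k.1 - a))) ^ (1/2:ℝ))
          hPmeas.aemeasurable
          (hPmeas.comp (measurable_const.sub measurable_id)).aemeasurable
        have hsq := le_trans (hCS) (mul_le_mul' hP2 hQ2)
        have := sqrt_le_of_sq_le_mul hsq
        calc (∫⁻ a : ℝ, (ENNReal.ofReal (π * Phi a)) ^ (1/2:ℝ)
              * (ENNReal.ofReal (π * Phi (k.1 - a))) ^ (1/2:ℝ))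
            ≤ (ENNReal.ofReal (π ^ 2)) ^ (1/2:ℝ) * (ENNReal.ofReal (π ^ 2)) ^ (1/2:ℝ) := this
          _ = ENNReal.ofReal (π ^ 2) := by
              rw [← pow_two]
              exact half_pow



lemma wbase_ge_one (k : ℝ × ℝ) : 1 ≤ 1 + k.1 ^ 2 + k.2 ^ 2 / k.1 ^ 2 := by
  have h1 : (0:ℝ) ≤ k.1 ^ 2 := sq_nonneg _
  have h2 : (0:ℝ) ≤ k.2 ^ 2 / k.1 ^ 2 := by positivity
  linarith

lemma wgt_one (k : ℝ × ℝ) : wgt 1 k = 1 + k.1 ^ 2 + k.2 ^ 2 / k.1 ^ 2 := by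
  unfold wgt; rw [Real.rpow_one]

lemma winv_mul_wgt (k : ℝ × ℝ) : winv k * wgt 1 k = 1 := by
  rw [wgt_one]
  unfold winv
  exact inv_mul_cancel₀ (by linarith [wbase_ge_one k])

lemma half_pow' {x : ENNReal} : (x ^ 2) ^ (1/2:ℝ) = x := by
  rw [← ENNReal.rpow_natCast x 2, ← ENNReal.rpow_mul]
  norm_num

lemma ofReal_integral_le {α : Type*} [MeasurableSpace α] (μ : MeasureTheory.Measure α)
    (h : α → ℝ) (hh : ∀ x, 0 ≤ h x) :
    ENNReal.ofReal (∫ x, h x ∂μ) ≤ ∫⁻ x, ENNReal.ofReal (h x) ∂μ := by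
  by_cases hi : MeasureTheory.Integrable h μ
  · rw [ofReal_integral_eq_lintegral_ofReal hi (Filter.Eventually.of_forall hh)]
  · rw [integral_undef hi]; simp

lemma measurable_wgt (r : ℝ) : Measurable (wgt r) := by
  exact ((measurable_const.add (measurable_fst.pow_const 2)).add
    ((measurable_snd.pow_const 2).div (measurable_fst.pow_const 2))).pow measurable_const

lemma conv_sq_bound (f g : ℝ × ℝ → ℂ) (hf : Measurable f) (hg : Measurable g) :
    ∫⁻ k : ℝ × ℝ, ENNReal.ofReal (‖conv f g k‖ ^ 2)
      ≤ ENNReal.ofReal (π ^ 2) * ((∫⁻ j : ℝ × ℝ, ENNReal.ofReal (wgt 1 j * ‖f j‖ ^ 2))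
        * (∫⁻ j : ℝ × ℝ, ENNReal.ofReal (wgt 1 j * ‖g j‖ ^ 2))) := by
  set F : ℝ × ℝ → ENNReal := fun j => ENNReal.ofReal (wgt 1 j * ‖f j‖ ^ 2) with hF
  set G : ℝ × ℝ → ENNReal := fun j => ENNReal.ofReal (wgt 1 j * ‖g j‖ ^ 2) with hG
  have hFmeas : Measurable F := ((measurable_wgt 1).mul (hf.norm.pow_const 2)).ennreal_ofReal
  have hGmeas : Measurable G := ((measurable_wgt 1).mul (hg.norm.pow_const 2)).ennreal_ofReal
  have ptk : ∀ k : ℝ × ℝ, ENNReal.ofReal (‖conv f g k‖ ^ 2)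
      ≤ ENNReal.ofReal (π ^ 2) * ∫⁻ j : ℝ × ℝ, F j * G (k - j) := by
    intro k
    set p : ℝ × ℝ → ENNReal := fun j =>
      (ENNReal.ofReal (winv j)) ^ (1/2:ℝ) * (ENNReal.ofReal (winv (k - j))) ^ (1/2:ℝ) with hp
    set q : ℝ × ℝ → ENNReal := fun j =>
      (F j) ^ (1/2:ℝ) * (G (k - j)) ^ (1/2:ℝ) with hq
    have hpm : Measurable p := ((measurable_winv.ennreal_ofReal).pow_const _).mul
      (((measurable_winv.comp (measurable_const.sub measurable_id)).ennreal_ofReal).pow_const _)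
    have hqm : Measurable q := (hFmeas.pow_const _).mul
      ((hGmeas.comp (measurable_const.sub measurable_id)).pow_const _)
    have hpq : ∀ j : ℝ × ℝ, ENNReal.ofReal ‖f j * g (k - j)‖ = p j * q j := by
      intro j
      have e1 : ∀ m : ℝ × ℝ, ∀ h : ℝ × ℝ → ℂ,
          (ENNReal.ofReal (winv m)) ^ (1/2:ℝ)
            * (ENNReal.ofReal (wgt 1 m * ‖h m‖ ^ 2)) ^ (1/2:ℝ) = ENNReal.ofReal ‖h m‖ := by
        intro m h
        rw [← ENNReal.mul_rpow_of_nonneg _ _ (by norm_num),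
          ← ENNReal.ofReal_mul (winv_nonneg m), ← mul_assoc, winv_mul_wgt m, one_mul,
          ENNReal.ofReal_pow (norm_nonneg _), half_pow']
      calc ENNReal.ofReal ‖f j * g (k - j)‖
          = ENNReal.ofReal ‖f j‖ * ENNReal.ofReal ‖g (k - j)‖ := by
            rw [norm_mul, ENNReal.ofReal_mul (norm_nonneg _)]
        _ = p j * q j := by
            rw [hp, hq, ← e1 j f, ← e1 (k - j) g]
            ring
    have h1 : ENNReal.ofReal ‖conv f g k‖ ≤ ∫⁻ j : ℝ × ℝ, p j * q j := by
      calc ENNReal.ofReal ‖conv f g k‖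
          ≤ ENNReal.ofReal (∫ j : ℝ × ℝ, ‖f j * g (k - j)‖) :=
            ENNReal.ofReal_le_ofReal (norm_integral_le_integral_norm _)
        _ ≤ ∫⁻ j : ℝ × ℝ, ENNReal.ofReal ‖f j * g (k - j)‖ :=
            ofReal_integral_le _ _ (fun j => norm_nonneg _)
        _ = ∫⁻ j : ℝ × ℝ, p j * q j := lintegral_congr hpq
    have h2 : (∫⁻ j : ℝ × ℝ, p j * q j) ^ 2
        ≤ (∫⁻ j : ℝ × ℝ, p j ^ 2) * ∫⁻ j : ℝ × ℝ, q j ^ 2 :=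
      lintegral_CS volume hpm.aemeasurable hqm.aemeasurable
    have hp2 : ∀ j : ℝ × ℝ, p j ^ 2 = ENNReal.ofReal (winv j) * ENNReal.ofReal (winv (k - j)) := by
      intro j
      rw [hp, mul_pow, ← ENNReal.rpow_natCast (_ ^ (1/2:ℝ)) 2,
        ← ENNReal.rpow_natCast ((ENNReal.ofReal (winv (k - j))) ^ (1/2:ℝ)) 2,
        ← ENNReal.rpow_mul, ← ENNReal.rpow_mul]
      norm_num
    have hq2 : ∀ j : ℝ × ℝ, q j ^ 2 = F j * G (k - j) := by
      intro j
      rw [hq, mul_pow, ← ENNReal.rpow_natCast (_ ^ (1/2:ℝ)) 2,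
        ← ENNReal.rpow_natCast ((G (k - j)) ^ (1/2:ℝ)) 2,
        ← ENNReal.rpow_mul, ← ENNReal.rpow_mul]
      norm_num
    calc ENNReal.ofReal (‖conv f g k‖ ^ 2)
        = (ENNReal.ofReal ‖conv f g k‖) ^ 2 := ENNReal.ofReal_pow (norm_nonneg _) 2
      _ ≤ (∫⁻ j : ℝ × ℝ, p j * q j) ^ 2 := pow_le_pow_left' h1 2
      _ ≤ (∫⁻ j : ℝ × ℝ, p j ^ 2) * ∫⁻ j : ℝ × ℝ, q j ^ 2 := h2
      _ ≤ ENNReal.ofReal (π ^ 2) * ∫⁻ j : ℝ × ℝ, F j * G (k - j) := by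
          apply mul_le_mul'
          · rw [lintegral_congr hp2]
            exact Ibound k
          · rw [lintegral_congr hq2]
  calc ∫⁻ k : ℝ × ℝ, ENNReal.ofReal (‖conv f g k‖ ^ 2)
      ≤ ∫⁻ k : ℝ × ℝ, ENNReal.ofReal (π ^ 2) * ∫⁻ j : ℝ × ℝ, F j * G (k - j) :=
        lintegral_mono ptk
    _ = ENNReal.ofReal (π ^ 2) * ∫⁻ k : ℝ × ℝ, ∫⁻ j : ℝ × ℝ, F j * G (k - j) :=
        lintegral_const_mul' _ _ ENNReal.ofReal_ne_top
    _ = ENNReal.ofReal (π ^ 2) * ((∫⁻ j : ℝ × ℝ, F j) * ∫⁻ j : ℝ × ℝ, G j) := by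
        congr 1
        rw [lintegral_lintegral_swap]
        · calc ∫⁻ j : ℝ × ℝ, ∫⁻ k : ℝ × ℝ, F j * G (k - j)
              = ∫⁻ j : ℝ × ℝ, F j * ∫⁻ k : ℝ × ℝ, G (k - j) := by
                refine lintegral_congr fun j => ?_
                exact lintegral_const_mul' _ _ ENNReal.ofReal_ne_top
            _ = ∫⁻ j : ℝ × ℝ, F j * ∫⁻ k : ℝ × ℝ, G k := by
                refine lintegral_congr fun j => ?_
                rw [lintegral_sub_right_eq_self G j]
            _ = (∫⁻ j : ℝ × ℝ, F j) * ∫⁻ j : ℝ × ℝ, G j :=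
                lintegral_mul_const _ hFmeas
        · exact ((hFmeas.comp measurable_snd).mul
            (hGmeas.comp (measurable_fst.sub measurable_snd))).aemeasurable



set_option maxHeartbeats 1000000 in
lemma stepA (β δ θ ε : ℝ) (hβ : 1 / 3 < β) (hδ : 0 < δ) (hθ : 0 < θ) (hθ1 : θ < 1)
    (hε : 0 < ε) (hε1 : ε < 1) (k : ℝ × ℝ) (z : ℂ) :
    wgt (1 + θ) k * ‖((mKP β k : ℝ) : ℂ)⁻¹ * (chiC ε δ k - 1) * z‖ ^ 2
      ≤ ((min 1 ((1/2) * (β - 1/3)))⁻¹ ^ 2 * δ ^ (2*θ - 2)) * ε ^ (1 - θ) * ‖z‖ ^ 2 := by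
  set c : ℝ := (1/2) * (β - 1/3) with hcdef
  have hc : 0 < c := by rw [hcdef]; linarith
  set c₁ : ℝ := min 1 c with hc1def
  have hc₁ : 0 < c₁ := lt_min one_pos hc
  have hc₁1 : c₁ ≤ 1 := min_le_left _ _
  have hc₁c : c₁ ≤ c := min_le_right _ _
  have hde : 0 < δ / ε := div_pos hδ hε
  have hCpos : 0 < c₁⁻¹ ^ 2 * δ ^ (2*θ - 2) := by
    have := Real.rpow_pos_of_pos hδ (2*θ - 2)
    positivity
  by_cases hin : |k.1| ≤ δ / ε ∧ |k.2 / k.1| ≤ δ / ε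
  · have : chiC ε δ k = 1 := if_pos hin
    rw [this, sub_self, mul_zero, zero_mul, norm_zero]
    have h0 : (0:ℝ) ^ 2 = 0 := by norm_num
    rw [h0, mul_zero]
    have hε2 : 0 < ε ^ (1 - θ) := Real.rpow_pos_of_pos hε _
    exact mul_nonneg (mul_nonneg hCpos.le hε2.le) (sq_nonneg _)
  · have hk1 : k.1 ≠ 0 := by
      intro h
      apply hin
      constructor
      · rw [h]; simpa using hde.le
      · rw [h]; simpa using hde.le
    have hin' : δ / ε < |k.1| ∨ δ / ε < |k.2 / k.1| := by
      by_contra h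
      push_neg at h
      exact hin ⟨h.1, h.2⟩
    set w : ℝ := 1 + k.1 ^ 2 + k.2 ^ 2 / k.1 ^ 2 with hwdef
    have hw1 : 1 ≤ w := wbase_ge_one k
    have hw0 : 0 < w := lt_of_lt_of_le one_pos hw1
    have hq : k.2 ^ 2 / k.1 ^ 2 = (k.2 / k.1) ^ 2 := (div_pow _ _ _).symm
    have hqnn : 0 ≤ k.2 ^ 2 / k.1 ^ 2 := by positivity
    have hwbig : (δ / ε) ^ 2 ≤ w := by
      rcases hin' with h | h
      · have := pow_le_pow_left₀ hde.le h.le 2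
        rw [sq_abs] at this
        rw [hwdef]; nlinarith
      · have := pow_le_pow_left₀ hde.le h.le 2
        rw [sq_abs] at this
        rw [hwdef, hq]; nlinarith
    have hm : c₁ * w ≤ mKP β k := by
      have h1 : c₁ * 1 ≤ 1 := by linarith
      have h2 : c₁ * k.1 ^ 2 ≤ c * k.1 ^ 2 := by nlinarith [sq_nonneg k.1]
      have h3 : c₁ * (k.2 ^ 2 / k.1 ^ 2) ≤ 1 * (k.2 ^ 2 / k.1 ^ 2) := by nlinarith
      unfold mKP
      rw [hwdef, ← hcdef]
      nlinarith
    have hm0 : 0 < mKP β k := lt_of_lt_of_le (by positivity) hm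
    have hchi : chiC ε δ k = 0 := if_neg hin
    rw [hchi]
    have hnorm : ‖((mKP β k : ℝ) : ℂ)⁻¹ * ((0:ℂ) - 1) * z‖ = (mKP β k)⁻¹ * ‖z‖ := by
      rw [norm_mul, norm_mul, norm_inv, Complex.norm_real, Real.norm_eq_abs,
        abs_of_pos hm0]
      simp
    rw [hnorm, mul_pow, ← mul_assoc]
    have hfactor : wgt (1 + θ) k * ((mKP β k)⁻¹) ^ 2
        ≤ c₁⁻¹ ^ 2 * δ ^ (2*θ - 2) * ε ^ (1 - θ) := by
      have hminv : (mKP β k)⁻¹ ≤ c₁⁻¹ * w⁻¹ := by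
        rw [← mul_inv]
        exact inv_anti₀ (by positivity) hm
      have hminv0 : 0 ≤ (mKP β k)⁻¹ := by positivity
      have step1 : wgt (1 + θ) k * ((mKP β k)⁻¹) ^ 2
          ≤ w ^ (1 + θ) * (c₁⁻¹ ^ 2 * (w⁻¹) ^ 2) := by
        have hwe : wgt (1 + θ) k = w ^ (1 + θ) := by unfold wgt; rw [hwdef]
        rw [hwe]
        have hW : 0 ≤ w ^ (1 + θ) := (Real.rpow_pos_of_pos hw0 _).le
        have h6 := pow_le_pow_left₀ hminv0 hminv 2
        rw [mul_pow] at h6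
        exact mul_le_mul_of_nonneg_left h6 hW
      have step2 : w ^ (1 + θ) * (w⁻¹) ^ 2 = w ^ (θ - 1) := by
        rw [inv_pow, ← Real.rpow_natCast w 2, ← Real.rpow_neg hw0.le,
          ← Real.rpow_add hw0]
        congr 1
        push_cast
        ring
      have step3 : w ^ (θ - 1) ≤ δ ^ (2*θ - 2) * ε ^ (1 - θ) := by
        have h1 : w ^ (θ - 1) ≤ ((δ/ε) ^ 2) ^ (θ - 1) := by
          apply Real.rpow_le_rpow_of_nonpos (by positivity) hwbig (by linarith)
        have h2 : ((δ/ε) ^ 2) ^ (θ - 1) = (δ/ε) ^ (2*(θ-1)) := by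
          rw [← Real.rpow_natCast (δ/ε) 2, ← Real.rpow_mul hde.le]
          norm_num
        have h3 : (δ/ε) ^ (2*(θ-1)) = δ ^ (2*θ-2) * ε ^ (2 - 2*θ) := by
          rw [Real.div_rpow hδ.le hε.le, div_eq_mul_inv, ← Real.rpow_neg hε.le]
          congr 1
          · congr 1; ring
          · congr 1; ring
        have h4 : ε ^ (2 - 2*θ) ≤ ε ^ (1 - θ) := by
          apply Real.rpow_le_rpow_of_exponent_ge hε hε1.le
          linarith
        calc w ^ (θ - 1) ≤ (δ/ε) ^ (2*(θ-1)) := h2 ▸ h1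
          _ = δ ^ (2*θ-2) * ε ^ (2 - 2*θ) := h3
          _ ≤ δ ^ (2*θ-2) * ε ^ (1 - θ) :=
              mul_le_mul_of_nonneg_left h4 (Real.rpow_pos_of_pos hδ _).le
      calc wgt (1 + θ) k * ((mKP β k)⁻¹) ^ 2
          ≤ w ^ (1 + θ) * (c₁⁻¹ ^ 2 * (w⁻¹) ^ 2) := step1
        _ = c₁⁻¹ ^ 2 * (w ^ (1 + θ) * (w⁻¹) ^ 2) := by ring
        _ = c₁⁻¹ ^ 2 * w ^ (θ - 1) := by rw [step2]
        _ ≤ c₁⁻¹ ^ 2 * (δ ^ (2*θ - 2) * ε ^ (1 - θ)) :=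
            mul_le_mul_of_nonneg_left step3 (by positivity)
        _ = c₁⁻¹ ^ 2 * δ ^ (2*θ - 2) * ε ^ (1 - θ) := by ring
    have hz2 : (0:ℝ) ≤ ‖z‖ ^ 2 := sq_nonneg _
    calc wgt (1 + θ) k * ((mKP β k)⁻¹) ^ 2 * ‖z‖ ^ 2
        ≤ c₁⁻¹ ^ 2 * δ ^ (2*θ - 2) * ε ^ (1 - θ) * ‖z‖ ^ 2 := by
          apply mul_le_mul_of_nonneg_right hfactor hz2
      _ = c₁⁻¹ ^ 2 * δ ^ (2*θ - 2) * ε ^ (1 - θ) * ‖z‖ ^ 2 := rfl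


/-- Bilinear estimate: `|m̃(D)⁻¹(χ_ε(D) - I)(ζρ)|_{Y^{1+θ}} ≲ ε^{(1-θ)/2} |ζ|_{Y¹} |ρ|_{Y¹}`
for θ ∈ (0,1), stated on the Fourier side with the physical-space product expressed as a
convolution. -/
theorem stmt10 (β δ θ : ℝ) (hβ : 1 / 3 < β) (hδ : 0 < δ) (hδ1 : δ < 1)
    (hθ : 0 < θ) (hθ1 : θ < 1) :
    ∃ C > (0 : ℝ), ∀ ε : ℝ, 0 < ε → ε < 1 → ∀ f g : ℝ × ℝ → ℂ,
      Measurable f → Measurable g →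
      Integrable (fun k => wgt (1 + θ) k * ‖f k‖ ^ 2) →
      Integrable (fun k => wgt (1 + θ) k * ‖g k‖ ^ 2) →
      Real.sqrt (YnormSq (1 + θ)
          (fun k => ((mKP β k : ℝ) : ℂ)⁻¹ * (chiC ε δ k - 1) * conv f g k))
        ≤ C * ε ^ ((1 - θ) / 2) * Real.sqrt (YnormSq 1 f) * Real.sqrt (YnormSq 1 g) := by
  have hc : 0 < (1/2:ℝ) * (β - 1/3) := by linarith
  set C₁ : ℝ := (min 1 ((1/2) * (β - 1/3)))⁻¹ ^ 2 * δ ^ (2*θ - 2) with hC₁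
  have hC₁pos : 0 < C₁ := by
    have h1 : 0 < min 1 ((1/2:ℝ) * (β - 1/3)) := lt_min one_pos hc
    have h2 := Real.rpow_pos_of_pos hδ (2*θ - 2)
    positivity
  have hwgtnn : ∀ (r : ℝ) (k : ℝ × ℝ), 0 ≤ wgt r k := fun r k =>
    Real.rpow_nonneg (le_trans zero_le_one (wbase_ge_one k)) r
  refine ⟨π * Real.sqrt C₁, mul_pos Real.pi_pos (Real.sqrt_pos.2 hC₁pos), ?_⟩
  intro ε hε hε1 f g hf hg hfi hgi
  -- weight-1 integrability
  have hbound : ∀ (h : ℝ × ℝ → ℂ) (k : ℝ × ℝ),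
      wgt 1 k * ‖h k‖ ^ 2 ≤ wgt (1 + θ) k * ‖h k‖ ^ 2 := fun h k =>
    mul_le_mul_of_nonneg_right
      (Real.rpow_le_rpow_of_exponent_le (wbase_ge_one k) (by linarith)) (sq_nonneg _)
  have h1int : ∀ (h : ℝ × ℝ → ℂ), Measurable h →
      Integrable (fun k => wgt (1 + θ) k * ‖h k‖ ^ 2) →
      Integrable (fun k => wgt 1 k * ‖h k‖ ^ 2) := by
    intro h hm hint
    refine hint.mono' (((measurable_wgt 1).mul (hm.norm.pow_const 2)).aestronglyMeasurable)
      (Filter.Eventually.of_forall fun k => ?_)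
    rw [Real.norm_eq_abs, abs_of_nonneg (mul_nonneg (hwgtnn 1 k) (sq_nonneg _))]
    exact hbound h k
  have h1f := h1int f hf hfi
  have h1g := h1int g hg hgi
  have hYfnn : 0 ≤ YnormSq 1 f :=
    integral_nonneg fun k => mul_nonneg (hwgtnn 1 k) (sq_nonneg _)
  have hYgnn : 0 ≤ YnormSq 1 g :=
    integral_nonneg fun k => mul_nonneg (hwgtnn 1 k) (sq_nonneg _)
  have hAf : (∫⁻ k : ℝ × ℝ, ENNReal.ofReal (wgt 1 k * ‖f k‖ ^ 2))
      = ENNReal.ofReal (YnormSq 1 f) :=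
    (ofReal_integral_eq_lintegral_ofReal h1f
      (Filter.Eventually.of_forall fun k => mul_nonneg (hwgtnn 1 k) (sq_nonneg _))).symm
  have hAg : (∫⁻ k : ℝ × ℝ, ENNReal.ofReal (wgt 1 k * ‖g k‖ ^ 2))
      = ENNReal.ofReal (YnormSq 1 g) :=
    (ofReal_integral_eq_lintegral_ofReal h1g
      (Filter.Eventually.of_forall fun k => mul_nonneg (hwgtnn 1 k) (sq_nonneg _))).symm
  -- measurability
  have hconv : Measurable (conv f g) := by
    have hsm : MeasureTheory.StronglyMeasurable
        fun p : (ℝ × ℝ) × (ℝ × ℝ) => f p.2 * g (p.1 - p.2) :=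
      ((hf.comp measurable_snd).mul
        (hg.comp (measurable_fst.sub measurable_snd))).stronglyMeasurable
    exact hsm.integral_prod_right'.measurable
  have hmKPm : Measurable fun k : ℝ × ℝ => mKP β k := by
    unfold mKP
    exact (measurable_const.add
      ((measurable_snd.pow_const 2).div (measurable_fst.pow_const 2))).add
      (measurable_const.mul (measurable_fst.pow_const 2))
  have hchiM : Measurable (chiC ε δ) := by
    unfold chiC
    refine Measurable.ite ?_ measurable_const measurable_const
    exact (measurableSet_le measurable_fst.abs measurable_const).inter
      (measurableSet_le (measurable_snd.div measurable_fst).abs measurable_const)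
  set X : ℝ × ℝ → ℂ :=
    fun k => ((mKP β k : ℝ) : ℂ)⁻¹ * (chiC ε δ k - 1) * conv f g k with hXdef
  have hXm : Measurable X :=
    ((Complex.measurable_ofReal.comp hmKPm).inv.mul
      (hchiM.sub measurable_const)).mul hconv
  have hFm : Measurable fun k => wgt (1 + θ) k * ‖X k‖ ^ 2 :=
    (measurable_wgt _).mul (hXm.norm.pow_const 2)
  have hnnR : 0 ≤ C₁ * ε ^ (1 - θ) :=
    mul_nonneg hC₁pos.le (Real.rpow_pos_of_pos hε _).le
  -- key estimate
  have key : (∫⁻ k : ℝ × ℝ, ENNReal.ofReal (wgt (1 + θ) k * ‖X k‖ ^ 2))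
      ≤ ENNReal.ofReal (C₁ * ε ^ (1 - θ) * (π ^ 2 * (YnormSq 1 f * YnormSq 1 g))) := by
    calc (∫⁻ k : ℝ × ℝ, ENNReal.ofReal (wgt (1 + θ) k * ‖X k‖ ^ 2))
        ≤ ∫⁻ k : ℝ × ℝ, ENNReal.ofReal (C₁ * ε ^ (1 - θ) * ‖conv f g k‖ ^ 2) := by
          refine lintegral_mono fun k => ENNReal.ofReal_le_ofReal ?_
          exact stepA β δ θ ε hβ hδ hθ hθ1 hε hε1 k (conv f g k)
      _ = ENNReal.ofReal (C₁ * ε ^ (1 - θ))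
            * ∫⁻ k : ℝ × ℝ, ENNReal.ofReal (‖conv f g k‖ ^ 2) := by
          simp_rw [mul_assoc (C₁) (ε ^ (1 - θ)), ← mul_assoc,
            ENNReal.ofReal_mul hnnR]
          rw [lintegral_const_mul' _ _ ENNReal.ofReal_ne_top]
      _ ≤ ENNReal.ofReal (C₁ * ε ^ (1 - θ)) * (ENNReal.ofReal (π ^ 2)
            * (ENNReal.ofReal (YnormSq 1 f) * ENNReal.ofReal (YnormSq 1 g))) := by
          apply mul_le_mul_right
          rw [← hAf, ← hAg]
          exact conv_sq_bound f g hf hg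
      _ = ENNReal.ofReal (C₁ * ε ^ (1 - θ) * (π ^ 2 * (YnormSq 1 f * YnormSq 1 g))) := by
          rw [← ENNReal.ofReal_mul hYfnn, ← ENNReal.ofReal_mul (by positivity),
            ← ENNReal.ofReal_mul hnnR]
  -- from lintegral to Bochner
  have hEq : YnormSq (1 + θ) X
      = (∫⁻ k : ℝ × ℝ, ENNReal.ofReal (wgt (1 + θ) k * ‖X k‖ ^ 2)).toReal := by
    unfold YnormSq
    exact integral_eq_lintegral_of_nonneg_ae
      (Filter.Eventually.of_forall fun k => mul_nonneg (hwgtnn _ k) (sq_nonneg _))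
      hFm.aestronglyMeasurable
  have hRnn : 0 ≤ C₁ * ε ^ (1 - θ) * (π ^ 2 * (YnormSq 1 f * YnormSq 1 g)) := by
    have := mul_nonneg hYfnn hYgnn
    positivity
  have hle : YnormSq (1 + θ) X
      ≤ C₁ * ε ^ (1 - θ) * (π ^ 2 * (YnormSq 1 f * YnormSq 1 g)) := by
    rw [hEq]
    exact ENNReal.toReal_le_of_le_ofReal hRnn key
  have hsqrt := Real.sqrt_le_sqrt hle
  refine le_trans hsqrt (le_of_eq ?_)
  have hεnn : (0:ℝ) ≤ ε ^ (1 - θ) := (Real.rpow_pos_of_pos hε _).le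
  have hhalf : Real.sqrt (ε ^ (1 - θ)) = ε ^ ((1 - θ) / 2) := by
    rw [Real.sqrt_eq_rpow, ← Real.rpow_mul hε.le]
    congr 1
    ring
  calc Real.sqrt (C₁ * ε ^ (1 - θ) * (π ^ 2 * (YnormSq 1 f * YnormSq 1 g)))
      = Real.sqrt C₁ * Real.sqrt (ε ^ (1 - θ))
        * (Real.sqrt (π ^ 2) * (Real.sqrt (YnormSq 1 f) * Real.sqrt (YnormSq 1 g))) := by
        rw [Real.sqrt_mul (mul_nonneg hC₁pos.le hεnn), Real.sqrt_mul hC₁pos.le,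
          Real.sqrt_mul (sq_nonneg π), Real.sqrt_mul hYfnn]
    _ = π * Real.sqrt C₁ * ε ^ ((1 - θ) / 2)
        * Real.sqrt (YnormSq 1 f) * Real.sqrt (YnormSq 1 g) := by
        rw [hhalf, Real.sqrt_sq Real.pi_nonneg]
        ring
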